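/- Let k ≥ 2, θ = 1 - 1/k, σ = 1/(2k² - 10k + 12), φ = θ + σ/k, t = ⌈(k/2) log k⌉, u = ⌈2k log k⌉ - t - 4, and γ = ⌈2k log k⌉ - 2k log k. Then θ^t·φ^u = e^{(4-γ)/k}·(1/k² - (log k)/k³ + O(k^{-7/2})) as k → ∞. -/

import Mathlib

open Real

lemma log_taylor2 {x : ℝ} (h0 : 0 ≤ x) (h1 : x ≤ 1/2) :
    |Real.log (1-x) + x + x^2/2| ≤ 2*x^3 := by
  have hx : |x| < 1 := by rw [abs_of_nonneg h0]; linarith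
  have h := Real.abs_log_sub_add_sum_range_le hx 2
  rw [Finset.sum_range_succ, Finset.sum_range_succ, Finset.sum_range_zero] at h
  norm_num at h
  rw [abs_of_nonneg h0] at h
  have h2 : |x|^3 / (1 - x) ≤ 2*x^3 := by
    rw [abs_of_nonneg h0, div_le_iff₀ (by linarith)]
    nlinarith [pow_nonneg h0 3]
  calc |Real.log (1-x) + x + x^2/2| = |x + x^2/2 + Real.log (1-x)| := by ring_nf
    _ ≤ |x|^3 / (1 - x) := by
        convert h using 2
        rw [abs_of_nonneg h0]
    _ ≤ 2*x^3 := h2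

set_option maxHeartbeats 1600000 in
theorem stmt_13 : ∃ C : ℝ, 0 < C ∧ ∃ K : ℕ, ∀ k : ℕ, K ≤ k →
    ∀ θ σ φ : ℝ, ∀ t u : ℕ, ∀ γ : ℝ,
      θ = 1 - 1/(k:ℝ) →
      σ = 1/(2*(k:ℝ)^2 - 10*k + 12) →
      φ = θ + σ/(k:ℝ) →
      t = ⌈((k:ℝ)/2) * Real.log k⌉₊ →
      u = ⌈2*(k:ℝ) * Real.log k⌉₊ - t - 4 →
      γ = (⌈2*(k:ℝ) * Real.log k⌉₊ : ℝ) - 2*(k:ℝ)*Real.log k →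
      |θ^t * φ^u - Real.exp ((4 - γ)/(k:ℝ)) * (1/(k:ℝ)^2 - Real.log k/(k:ℝ)^3)|
        ≤ C * (k:ℝ) ^ (-(7/2 : ℝ)) := by
  refine ⟨1000, by norm_num, 1000000, ?_⟩
  intro k hk θ σ φ t u γ hθ hσ hφ ht hu hγ
  have hkR : (1000000:ℝ) ≤ (k:ℝ) := by exact_mod_cast hk
  have hk0 : (0:ℝ) < k := by linarith
  have hkne : (k:ℝ) ≠ 0 := hk0.ne'
  set L := Real.log k with hLdef
  have hL1 : 1 ≤ L := by
    rw [hLdef, Real.le_log_iff_exp_le hk0]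
    have := Real.exp_one_lt_d9
    linarith
  have hL0 : 0 ≤ L := by linarith
  set s := (k:ℝ)^((1/2):ℝ) with hsdef
  set q := (k:ℝ)^((1/4):ℝ) with hqdef
  have hs0 : (0:ℝ) ≤ s := Real.rpow_nonneg hk0.le _
  have hq0 : (0:ℝ) ≤ q := Real.rpow_nonneg hk0.le _
  have hs2 : s^2 = k := by
    rw [hsdef, ← Real.rpow_natCast ((k:ℝ)^((1/2):ℝ)) 2, ← Real.rpow_mul hk0.le]
    norm_num
  have hq2 : q^2 = s := by
    rw [hqdef, hsdef, ← Real.rpow_natCast ((k:ℝ)^((1/4):ℝ)) 2, ← Real.rpow_mul hk0.le]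
    norm_num
  have hs1000 : 1000 ≤ s := by nlinarith
  have hLq : L ≤ 4*q := by
    have h := Real.log_le_rpow_div hk0.le (by norm_num : (0:ℝ) < 1/4)
    rw [hLdef]
    rw [hqdef] at *
    linarith [h]
  have hLs : L ≤ 2*s := by
    have h := Real.log_le_rpow_div hk0.le (by norm_num : (0:ℝ) < 1/2)
    rw [hLdef]
    rw [hsdef] at *
    linarith [h]
  have hL2s : L^2 ≤ 16*s := by
    nlinarith [mul_le_mul hLq hLq hL0 (by positivity : (0:ℝ) ≤ 4*q)]
  have hLk : 2*L ≤ k := by nlinarith [mul_nonneg hs0 (by linarith : (0:ℝ) ≤ s - 4)]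
  -- sigma facts
  have h10k : 10*(k:ℝ) ≤ (k:ℝ)^2 := by
    have h := mul_le_mul_of_nonneg_right (show (10:ℝ) ≤ k by linarith) hk0.le
    linarith [h]
  have hD : (0:ℝ) < 2*(k:ℝ)^2 - 10*k + 12 := by linarith [h10k, sq_nonneg (k:ℝ)]
  have hσ0 : 0 < σ := by rw [hσ]; positivity
  have hσk : σ ≤ 1/(k:ℝ)^2 := by
    rw [hσ]
    apply one_div_le_one_div_of_le (by positivity)
    linarith [h10k]
  have hk2_1 : (1:ℝ) < (k:ℝ)^2 := by linarith [h10k]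
  have hσ1 : σ < 1 := lt_of_le_of_lt hσk (by rw [div_lt_one (by positivity)]; linarith)
  -- theta, phi facts
  have hkinv1 : 1/(k:ℝ) < 1 := by rw [div_lt_one hk0]; linarith
  have hθ0 : 0 < θ := by rw [hθ]; linarith
  set y := (1 - σ)/(k:ℝ) with hydef
  have hφy : φ = 1 - y := by rw [hφ, hθ, hydef]; ring
  have hy0 : 0 ≤ y := by apply div_nonneg <;> linarith
  have hyk : y ≤ 1/(k:ℝ) := by rw [hydef]; gcongr; linarith
  have hφ0 : 0 < φ := by rw [hφy]; linarith
  -- log estimates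
  have hkinv2 : 1/(k:ℝ) ≤ 1/2 := by
    rw [div_le_div_iff₀ hk0 (by norm_num)]; linarith
  have ha0 := log_taylor2 (x := 1/(k:ℝ)) (by positivity) hkinv2
  rw [← hθ] at ha0
  have hb0 := log_taylor2 (x := y) hy0 (le_trans hyk hkinv2)
  rw [← hφy] at hb0
  obtain ⟨ha1, ha2⟩ := abs_le.mp ha0
  obtain ⟨hb1, hb2⟩ := abs_le.mp hb0
  set c2 := (1/(k:ℝ))^2 with hc2def
  set c3 := (1/(k:ℝ))^3 with hc3def
  have hc2_0 : 0 ≤ c2 := by positivity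
  have hc3_0 : 0 ≤ c3 := by positivity
  set a := Real.log θ + 1/(k:ℝ) with hadef
  set b := Real.log φ + 1/(k:ℝ) with hbdef
  -- bounds on a
  have ha2' : a ≤ 2*c3 - c2/2 := by rw [hadef, hc3def, hc2def]; linarith [ha2]
  have ha1' : -(2*c3) - c2/2 ≤ a := by rw [hadef, hc3def, hc2def]; linarith [ha1]
  -- bounds on b
  have hyσ : 1/(k:ℝ) - y = σ * (1/(k:ℝ)) := by rw [hydef]; ring
  have hσc3 : σ * (1/(k:ℝ)) ≤ c3 := by
    rw [hc3def]
    calc σ * (1/(k:ℝ)) ≤ (1/(k:ℝ)^2) * (1/(k:ℝ)) :=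
          mul_le_mul_of_nonneg_right hσk (by positivity)
      _ = (1/(k:ℝ))^3 := by ring
  have hy2 : c2/2 - y^2/2 ≤ c3 := by
    have hfact : c2/2 - y^2/2 = (σ * (1/(k:ℝ))) * (1/(k:ℝ) + y) / 2 := by
      rw [hc2def, hydef]; ring
    have hyk2 : 1/(k:ℝ) + y ≤ 2 * (1/(k:ℝ)) := by linarith
    have h2 : (σ * (1/(k:ℝ))) * (1/(k:ℝ) + y) ≤ c3 * (2 * (1/(k:ℝ))) := by
      apply mul_le_mul hσc3 hyk2 (by positivity) hc3_0
    have h3 : c3 * (2 * (1/(k:ℝ))) ≤ 2 * c3 := by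
      rw [hc3def]
      have h4 := pow_le_pow_of_le_one (by positivity : (0:ℝ) ≤ 1/(k:ℝ))
        (le_of_lt hkinv1) (by norm_num : 3 ≤ 4)
      linarith [h4]
    rw [hc3def] at *
    linarith [hfact, h2, h3]
  have hy2' : 0 ≤ c2/2 - y^2/2 := by
    rw [hc2def]
    linarith [pow_le_pow_left₀ hy0 hyk 2]
  have hy3 : y^3 ≤ c3 := by
    rw [hc3def]; exact pow_le_pow_left₀ hy0 hyk 3
  have hy3' : 0 ≤ y^3 := by positivity
  have hb2' : b ≤ 4*c3 - c2/2 := by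
    -- b = (log φ + y + y²/2) + (1/k - y) + (c2/2 - y²/2) - c2/2
    have hbeq : b = (Real.log φ + y + y^2/2) + (1/(k:ℝ) - y) + (c2/2 - y^2/2) - c2/2 := by
      rw [hbdef]; ring
    rw [hbeq, hyσ]
    linarith [hb2, hσc3, hy2, hy3]
  have hb1' : -(4*c3) - c2/2 ≤ b := by
    have hbeq : b = (Real.log φ + y + y^2/2) + (1/(k:ℝ) - y) + (c2/2 - y^2/2) - c2/2 := by
      rw [hbdef]; ring
    rw [hbeq, hyσ]
    have hσc3' : 0 ≤ σ * (1/(k:ℝ)) := by positivity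
    linarith [hb1, hy3]
  -- t, u, gamma facts
  have hγ0 : 0 ≤ γ := by
    rw [hγ]; linarith [Nat.le_ceil (2*(k:ℝ)*L)]
  have hγ1 : γ ≤ 1 := by
    rw [hγ]
    have h := Nat.ceil_lt_add_one (show (0:ℝ) ≤ 2*(k:ℝ)*L by positivity)
    linarith
  have hkL : (1000000:ℝ) ≤ (k:ℝ)*L := by
    have := mul_le_mul_of_nonneg_left hL1 hk0.le
    linarith [hkR, this]
  have htlt : (t:ℝ) < (k:ℝ)/2 * L + 1 := by
    rw [ht]; exact Nat.ceil_lt_add_one (by positivity)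
  have ht0' : (0:ℝ) ≤ (t:ℝ) := Nat.cast_nonneg t
  have hu0' : (0:ℝ) ≤ (u:ℝ) := Nat.cast_nonneg u
  have hN4 : t + 4 ≤ ⌈2*(k:ℝ)*L⌉₊ := by
    have h2 : 2*(k:ℝ)*L ≤ (⌈2*(k:ℝ)*L⌉₊:ℝ) := Nat.le_ceil _
    have h3 : ((t:ℝ)) + 4 ≤ ((⌈2*(k:ℝ)*L⌉₊:ℝ)) := by linarith [hkL, htlt, h2]
    exact_mod_cast h3
  have huR : (u:ℝ) = (⌈2*(k:ℝ)*L⌉₊:ℝ) - t - 4 := by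
    rw [hu, Nat.sub_sub, Nat.cast_sub hN4]
    push_cast
    ring
  have htu : (t:ℝ) + (u:ℝ) = 2*(k:ℝ)*L + γ - 4 := by
    rw [huR]; rw [hγ]; ring
  have htuk : (t:ℝ) + (u:ℝ) ≤ 2*(k:ℝ)*L := by linarith
  have htuk' : 2*(k:ℝ)*L - 4 ≤ (t:ℝ) + (u:ℝ) := by linarith
  -- main exponential identity
  set S := (t:ℝ)*a + (u:ℝ)*b with hSdef
  have hA : θ^t * φ^u = Real.exp ((4-γ)/(k:ℝ)) * (1/(k:ℝ)^2) * Real.exp S := by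
    have e1 : θ^t = Real.exp ((t:ℝ) * Real.log θ) := by
      rw [Real.exp_nat_mul, Real.exp_log hθ0]
    have e2 : φ^u = Real.exp ((u:ℝ) * Real.log φ) := by
      rw [Real.exp_nat_mul, Real.exp_log hφ0]
    have e3 : (t:ℝ) * Real.log θ + (u:ℝ) * Real.log φ = (4-γ)/(k:ℝ) + (-(L+L)) + S := by
      rw [hSdef, hadef, hbdef]
      field_simp
      linear_combination -htu
    have e4 : Real.exp (-(L+L)) = 1/(k:ℝ)^2 := by
      rw [Real.exp_neg, Real.exp_add, hLdef, Real.exp_log hk0]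
      field_simp
    rw [e1, e2, ← Real.exp_add, e3, Real.exp_add, Real.exp_add, e4]
  -- bounds on S
  have hXneg : 4*c3 - c2/2 ≤ 0 := by
    have h8 : 8*(1/(k:ℝ)) ≤ 1 := by
      rw [mul_one_div, div_le_one hk0]; linarith
    have h := mul_le_mul_of_nonneg_right h8 hc2_0
    have hc32 : (8*(1/(k:ℝ)))*c2 = 8*c3 := by rw [hc2def, hc3def]; ring
    linarith [h, hc32.symm.le, hc32.le]
  have hXneg' : -(4*c3) - c2/2 ≤ 0 := by linarith
  have hSub : S ≤ ((t:ℝ)+u) * (4*c3 - c2/2) := by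
    have h1 : (t:ℝ)*a ≤ (t:ℝ)*(4*c3 - c2/2) :=
      mul_le_mul_of_nonneg_left (by linarith [ha2', hc3_0]) ht0'
    have h2 : (u:ℝ)*b ≤ (u:ℝ)*(4*c3 - c2/2) :=
      mul_le_mul_of_nonneg_left hb2' hu0'
    rw [hSdef]; linarith [h1, h2]
  have hSlb : ((t:ℝ)+u) * (-(4*c3) - c2/2) ≤ S := by
    have h1 : (t:ℝ)*(-(4*c3) - c2/2) ≤ (t:ℝ)*a :=
      mul_le_mul_of_nonneg_left (by linarith [ha1', hc3_0]) ht0'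
    have h2 : (u:ℝ)*(-(4*c3) - c2/2) ≤ (u:ℝ)*b :=
      mul_le_mul_of_nonneg_left hb1' hu0'
    rw [hSdef]; linarith [h1, h2]
  have hstep1 : ((t:ℝ)+u) * (4*c3 - c2/2) ≤ (2*(k:ℝ)*L - 4) * (4*c3 - c2/2) :=
    mul_le_mul_of_nonpos_right htuk' hXneg
  have hstep2 : (2*(k:ℝ)*L) * (-(4*c3) - c2/2) ≤ ((t:ℝ)+u) * (-(4*c3) - c2/2) :=
    mul_le_mul_of_nonpos_right htuk hXneg'
  have hexp2 : (2*(k:ℝ)*L - 4) * (4*c3 - c2/2)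
      = -(L*(1/(k:ℝ))) + 8*L*c2 + 2*c2 - 16*c3 := by
    rw [hc2def, hc3def]; field_simp; ring
  have hexp3 : (2*(k:ℝ)*L) * (-(4*c3) - c2/2) = -(L*(1/(k:ℝ))) - 8*L*c2 := by
    rw [hc2def, hc3def]; field_simp; ring
  have hLc2 : 0 ≤ (L-1)*c2 := mul_nonneg (by linarith) hc2_0
  have hLc2' : 0 ≤ L*c2 := mul_nonneg hL0 hc2_0
  have hSup : S + L*(1/(k:ℝ)) ≤ 10*(L*c2) := by
    linarith [hSub, hstep1, hexp2.le, hexp2.ge, hLc2, hc3_0]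
  have hSlo : -(10*(L*c2)) ≤ S + L*(1/(k:ℝ)) := by
    linarith [hSlb, hstep2, hexp3.le, hexp3.ge, hLc2']
  -- |S| ≤ 1
  have h10c2 : 10*c2 ≤ 1/(k:ℝ) := by
    have h10 : 10*(1/(k:ℝ)) ≤ 1 := by rw [mul_one_div, div_le_one hk0]; linarith
    have h := mul_le_mul_of_nonneg_right h10 (by positivity : (0:ℝ) ≤ 1/(k:ℝ))
    have hc : (10*(1/(k:ℝ)))*(1/(k:ℝ)) = 10*c2 := by rw [hc2def]; ring
    linarith [h, hc.le, hc.ge]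
  have h10Lc2 : 10*(L*c2) ≤ L*(1/(k:ℝ)) := by
    have h := mul_le_mul_of_nonneg_left h10c2 hL0
    linarith [h]
  have hLk1 : 2*(L*(1/(k:ℝ))) ≤ 1 := by
    have h := mul_le_mul_of_nonneg_right hLk (by positivity : (0:ℝ) ≤ 1/(k:ℝ))
    have hkk : (k:ℝ)*(1/(k:ℝ)) = 1 := by field_simp
    linarith [h, hkk.le, hkk.ge]
  have hSM : |S| ≤ 2*(L*(1/(k:ℝ))) := by
    rw [abs_le]
    constructor <;> linarith [hSup, hSlo, h10Lc2]
  have hSabs1 : |S| ≤ 1 := le_trans hSM hLk1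
  have hS2 : S^2 ≤ 4*(L^2*c2) := by
    have h := pow_le_pow_left₀ (abs_nonneg S) hSM 2
    rw [sq_abs] at h
    have he : (2*(L*(1/(k:ℝ))))^2 = 4*(L^2*c2) := by rw [hc2def]; ring
    exact le_of_le_of_eq h he
  have hexpS := Real.abs_exp_sub_one_sub_id_le hSabs1
  have hL2c2 : L*c2 ≤ L^2*c2 := by
    have h := mul_nonneg (mul_nonneg hL0 (show (0:ℝ) ≤ L-1 by linarith)) hc2_0
    linarith [h]
  have hEbound : |Real.exp S - (1 - L*(1/(k:ℝ)))| ≤ 14*(L^2*c2) := by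
    have hid : Real.exp S - (1 - L*(1/(k:ℝ))) = (Real.exp S - 1 - S) + (S + L*(1/(k:ℝ))) := by
      ring
    rw [hid]
    refine le_trans (abs_add_le _ _) ?_
    have h1 : |S + L*(1/(k:ℝ))| ≤ 10*(L*c2) := abs_le.mpr ⟨hSlo, hSup⟩
    linarith [hexpS, hS2, h1, hL2c2]
  -- final assembly
  have hgk : (4 - γ)/(k:ℝ) ≤ 1 := by rw [div_le_one hk0]; linarith
  have hexpγ : Real.exp ((4-γ)/(k:ℝ)) ≤ 3 :=
    le_trans (Real.exp_le_exp.mpr hgk) (by linarith [Real.exp_one_lt_d9])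
  have hBid : Real.exp ((4-γ)/(k:ℝ)) * (1/(k:ℝ)^2 - L/(k:ℝ)^3)
      = Real.exp ((4-γ)/(k:ℝ)) * (1/(k:ℝ)^2) * (1 - L*(1/(k:ℝ))) := by
    field_simp
  have hdiff : θ^t * φ^u - Real.exp ((4-γ)/(k:ℝ)) * (1/(k:ℝ)^2 - L/(k:ℝ)^3)
      = Real.exp ((4-γ)/(k:ℝ)) * (1/(k:ℝ)^2) * (Real.exp S - (1 - L*(1/(k:ℝ)))) := by
    rw [hA, hBid]; ring
  rw [hdiff, abs_mul, abs_of_nonneg (by positivity : (0:ℝ) ≤ Real.exp ((4-γ)/(k:ℝ)) * (1/(k:ℝ)^2))]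
  have hc2s : L^2*c2 ≤ 16*(s*c2) := by
    have h := mul_le_mul_of_nonneg_right hL2s hc2_0
    linarith [h]
  have hfin1 : Real.exp ((4-γ)/(k:ℝ)) * (1/(k:ℝ)^2) * |Real.exp S - (1 - L*(1/(k:ℝ)))|
      ≤ (3 * (1/(k:ℝ)^2)) * (14*(16*(s*c2))) := by
    apply mul_le_mul
    · exact mul_le_mul_of_nonneg_right hexpγ (by positivity)
    · refine le_trans hEbound ?_
      linarith [hc2s]
    · exact abs_nonneg _
    · positivity
  have hr : (3 * (1/(k:ℝ)^2)) * (14*(16*(s*c2))) = 672 * (s * (1/(k:ℝ))^4) := by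
    rw [hc2def]; ring
  have hr2 : s * (1/(k:ℝ))^4 = (k:ℝ)^(-(7/2:ℝ)) := by
    have h4 : (1/(k:ℝ))^4 = (k:ℝ)^((-4:ℝ)) := by
      rw [Real.rpow_neg hk0.le, show ((4:ℝ)) = ((4:ℕ):ℝ) by norm_num, Real.rpow_natCast]
      rw [one_div, inv_pow]
    rw [h4, hsdef, ← Real.rpow_add hk0]
    norm_num
  have hrpos : 0 ≤ (k:ℝ)^(-(7/2:ℝ)) := Real.rpow_nonneg hk0.le _
  calc Real.exp ((4-γ)/(k:ℝ)) * (1/(k:ℝ)^2) * |Real.exp S - (1 - L*(1/(k:ℝ)))|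
      ≤ (3 * (1/(k:ℝ)^2)) * (14*(16*(s*c2))) := hfin1
    _ = 672 * (s * (1/(k:ℝ))^4) := hr
    _ = 672 * (k:ℝ)^(-(7/2:ℝ)) := by rw [hr2]
    _ ≤ 1000 * (k:ℝ)^(-(7/2:ℝ)) := by linarith [hrpos]
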